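/- For p, q > 1, the generalized sine function sin_{p,q}, defined as the inverse of arcsin_{p,q}(x) = ∫_0^x (1-t^q)^(-1/p) dt on [0,1], is geometrically concave on (0, π_{p,q}/2): for all r, s ∈ (0, π_{p,q}/2) and λ ∈ [0,1], sin_{p,q}(r^λ s^(1-λ)) ≥ sin_{p,q}(r)^λ · sin_{p,q}(s)^(1-λ), where π_{p,q}/2 = ∫_0^1 (1-t^q)^(-1/p) dt. -/

import Mathlib

open Real Set intervalIntegral MeasureTheory ENNReal NNReal

lemma pq_measurable (p q : ℝ) : Measurable (fun t : ℝ => (1 - t ^ q) ^ (-1/p)) :=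
  ((measurable_id.pow measurable_const).const_sub 1).pow measurable_const

lemma pq_intInt (p q : ℝ) (hp : 1 < p) (hq : 1 < q) :
    IntervalIntegrable (fun t : ℝ => (1 - t ^ q) ^ (-1/p)) volume 0 1 := by
  have hexp : -1 < -1/p := by
    rw [neg_div, neg_lt_neg_iff, div_lt_one (by linarith)]; linarith
  have hg : IntervalIntegrable (fun t : ℝ => (1 - t) ^ (-1/p)) volume 0 1 := by
    have := (intervalIntegrable_rpow' (a := 0) (b := 1) hexp).comp_sub_left 1
    simpa using this.symm
  refine hg.mono_fun (pq_measurable p q).aestronglyMeasurable ?_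
  rw [uIoc_of_le (by norm_num : (0:ℝ) ≤ 1)]
  refine (ae_restrict_iff' measurableSet_Ioc).mpr (ae_of_all _ fun t ht => ?_)
  have ht0 : 0 < t := ht.1
  have ht1 : t ≤ 1 := ht.2
  have htq : t ^ q ≤ t := by
    simpa using Real.rpow_le_rpow_of_exponent_ge ht0 ht1 hq.le
  have hnn : 0 ≤ (1 - t ^ q) ^ (-1/p) := Real.rpow_nonneg (by linarith) _
  simp only [Real.norm_eq_abs]
  rw [abs_of_nonneg hnn, abs_of_nonneg (Real.rpow_nonneg (by linarith) _)]
  rcases eq_or_lt_of_le ht1 with h1 | h1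
  · subst h1
    simp [Real.one_rpow, Real.zero_rpow (by positivity : -1/p ≠ 0)]
  · exact Real.rpow_le_rpow_of_nonpos (by linarith) (by linarith)
      (by rw [neg_div, neg_nonpos]; positivity)

lemma pq_ptwise (p q : ℝ) (hp : 1 < p) (hq : 1 < q) {a b l : ℝ}
    (ha : a ∈ Set.Ioo (0:ℝ) 1) (hb : b ∈ Set.Ioo (0:ℝ) 1) (hl : l ∈ Set.Ioo (0:ℝ) 1) :
    (1 - (a ^ l * b ^ (1-l)) ^ q) ^ (-1/p) ≤
      ((1 - a ^ q) ^ (-1/p)) ^ l * ((1 - b ^ q) ^ (-1/p)) ^ (1-l) := by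
  obtain ⟨ha0, ha1⟩ := ha
  obtain ⟨hb0, hb1⟩ := hb
  obtain ⟨hl0, hl1⟩ := hl
  set A := a ^ q with hA
  set B := b ^ q with hB
  have hA0 : 0 < A := Real.rpow_pos_of_pos ha0 q
  have hB0 : 0 < B := Real.rpow_pos_of_pos hb0 q
  have hA1 : A < 1 := by
    rw [hA]; exact Real.rpow_lt_one ha0.le ha1 (by linarith)
  have hB1 : B < 1 := by
    rw [hB]; exact Real.rpow_lt_one hb0.le hb1 (by linarith)
  have hcq : (a ^ l * b ^ (1-l)) ^ q = A ^ l * B ^ (1-l) := by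
    rw [Real.mul_rpow (Real.rpow_nonneg ha0.le _) (Real.rpow_nonneg hb0.le _),
      ← Real.rpow_mul ha0.le, ← Real.rpow_mul hb0.le, mul_comm l q, mul_comm (1-l) q,
      Real.rpow_mul ha0.le, Real.rpow_mul hb0.le]
  rw [hcq]
  set M := A ^ l * B ^ (1-l) with hM
  have hMam : M ≤ l * A + (1-l) * B :=
    Real.geom_mean_le_arith_mean2_weighted hl0.le (by linarith) hA0.le hB0.le (by ring)
  have hGam : (1-A) ^ l * (1-B) ^ (1-l) ≤ 1 - M := by
    have h2 : (1-A) ^ l * (1-B) ^ (1-l) ≤ l * (1-A) + (1-l) * (1-B) :=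
      Real.geom_mean_le_arith_mean2_weighted hl0.le (by linarith) (by linarith) (by linarith)
        (by ring)
    nlinarith
  have hGpos : 0 < (1-A) ^ l * (1-B) ^ (1-l) :=
    mul_pos (Real.rpow_pos_of_pos (by linarith) _) (Real.rpow_pos_of_pos (by linarith) _)
  have hstep : (1 - M) ^ (-1/p) ≤ ((1-A) ^ l * (1-B) ^ (1-l)) ^ (-1/p) :=
    Real.rpow_le_rpow_of_nonpos hGpos hGam
      (by rw [neg_div, neg_nonpos]; exact div_nonneg zero_le_one (by linarith))
  refine hstep.trans (le_of_eq ?_)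
  rw [Real.mul_rpow (Real.rpow_nonneg (by linarith) _) (Real.rpow_nonneg (by linarith) _),
    ← Real.rpow_mul (by linarith : (0:ℝ) ≤ 1 - A), ← Real.rpow_mul (by linarith : (0:ℝ) ≤ 1 - B),
    mul_comm l (-1/p), mul_comm (1-l) (-1/p),
    Real.rpow_mul (by linarith : (0:ℝ) ≤ 1 - A), Real.rpow_mul (by linarith : (0:ℝ) ≤ 1 - B)]

lemma pq_sub_int (p q : ℝ) (hp : 1 < p) (hq : 1 < q) {a b : ℝ}
    (ha : a ∈ Set.Icc (0:ℝ) 1) (hb : b ∈ Set.Icc (0:ℝ) 1) :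
    IntervalIntegrable (fun t : ℝ => (1 - t ^ q) ^ (-1/p)) volume a b := by
  refine (pq_intInt p q hp hq).mono_set ?_
  rw [Set.uIcc_of_le (by norm_num : (0:ℝ) ≤ 1)]
  exact Set.uIcc_subset_Icc ha hb

lemma pq_F_mono (p q : ℝ) (hp : 1 < p) (hq : 1 < q) :
    StrictMonoOn (fun x : ℝ => ∫ t in (0:ℝ)..x, (1 - t ^ q) ^ (-1/p)) (Set.Icc 0 1) := by
  intro x hx y hy hxy
  have h1 : IntervalIntegrable (fun t : ℝ => (1 - t ^ q) ^ (-1/p)) volume 0 x :=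
    pq_sub_int p q hp hq (Set.mem_Icc.mpr ⟨le_refl 0, zero_le_one⟩) hx
  have h2 : IntervalIntegrable (fun t : ℝ => (1 - t ^ q) ^ (-1/p)) volume x y :=
    pq_sub_int p q hp hq hx hy
  have hadd := intervalIntegral.integral_add_adjacent_intervals h1 h2
  simp only
  rw [← hadd, lt_add_iff_pos_right]
  refine intervalIntegral.intervalIntegral_pos_of_pos_on h2 (fun t ht => ?_) hxy
  have ht0 : 0 < t := lt_of_le_of_lt hx.1 ht.1
  have ht1 : t < 1 := lt_of_lt_of_le ht.2 hy.2
  have : t ^ q < 1 := Real.rpow_lt_one ht0.le ht1 (by linarith) |>.trans_le le_rfl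
  exact Real.rpow_pos_of_pos (by linarith) _

lemma pq_F_cont (p q : ℝ) (hp : 1 < p) (hq : 1 < q) :
    ContinuousOn (fun x : ℝ => ∫ t in (0:ℝ)..x, (1 - t ^ q) ^ (-1/p)) (Set.Icc 0 1) := by
  have h := intervalIntegral.continuousOn_primitive_interval
    (f := fun t : ℝ => (1 - t ^ q) ^ (-1/p)) (a := (0:ℝ)) (b := (1:ℝ)) (μ := volume) ?_
  · simpa [Set.uIcc_of_le (zero_le_one : (0:ℝ) ≤ 1)] using h
  · have := (pq_intInt p q hp hq)
    rwa [intervalIntegrable_iff'] at this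

lemma pq_F_gconvex (p q : ℝ) (hp : 1 < p) (hq : 1 < q) {x y l : ℝ}
    (hx : x ∈ Set.Ioc (0:ℝ) 1) (hy : y ∈ Set.Ioc (0:ℝ) 1) (hl : l ∈ Set.Ioo (0:ℝ) 1) :
    (∫ t in (0:ℝ)..(x ^ l * y ^ (1-l)), (1 - t ^ q) ^ (-1/p)) ≤
      (∫ t in (0:ℝ)..x, (1 - t ^ q) ^ (-1/p)) ^ l *
      (∫ t in (0:ℝ)..y, (1 - t ^ q) ^ (-1/p)) ^ (1-l) := by
  obtain ⟨hx0, hx1⟩ := hx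
  obtain ⟨hy0, hy1⟩ := hy
  obtain ⟨hl0, hl1⟩ := hl
  set f : ℝ → ℝ := fun t => (1 - t ^ q) ^ (-1/p) with hf
  set m : ℝ := x ^ l * y ^ (1-l) with hm
  have hm0 : 0 < m := mul_pos (Real.rpow_pos_of_pos hx0 _) (Real.rpow_pos_of_pos hy0 _)
  have hm1 : m ≤ 1 := by
    calc m ≤ 1 ^ l * 1 ^ (1-l) :=
          mul_le_mul (Real.rpow_le_rpow hx0.le hx1 hl0.le)
            (Real.rpow_le_rpow hy0.le hy1 (by linarith)) (Real.rpow_nonneg hy0.le _)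
            (Real.rpow_nonneg zero_le_one _)
      _ = 1 := by simp
  -- f is nonneg on [0,1]
  have hfnn : ∀ t : ℝ, t ∈ Set.Icc (0:ℝ) 1 → 0 ≤ f t := by
    intro t ht
    have : t ^ q ≤ 1 := Real.rpow_le_one ht.1 ht.2 (by linarith)
    exact Real.rpow_nonneg (by linarith) _
  -- substituted integrals
  set I : ℝ → ℝ := fun z => ∫ u in (0:ℝ)..1, f (z * u) with hI
  have hIint : ∀ z : ℝ, 0 < z → z ≤ 1 → IntervalIntegrable (fun u => f (z * u)) volume 0 1 := by
    intro z hz0 hz1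
    have h := (pq_sub_int p q hp hq (a := 0) (b := z) (by simp) (by constructor <;> linarith)).comp_mul_left (c := z)
    simpa [hz0.ne'] using h
  have hFI : ∀ z : ℝ, 0 < z → (∫ t in (0:ℝ)..z, f t) = z * I z := by
    intro z hz0
    rw [hI]
    simp only
    rw [intervalIntegral.integral_comp_mul_left f hz0.ne']
    simp [smul_eq_mul, hz0.ne']
  have hInn : ∀ z : ℝ, 0 < z → z ≤ 1 → 0 ≤ I z := by
    intro z hz0 hz1
    refine intervalIntegral.integral_nonneg zero_le_one fun u hu => ?_
    exact hfnn _ ⟨mul_nonneg hz0.le hu.1, by nlinarith [hu.1, hu.2]⟩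
  -- key inequality in ENNReal
  have hmeas : ∀ z : ℝ, Measurable (fun u : ℝ => ENNReal.ofReal (f (z * u))) := by
    intro z
    exact ((pq_measurable p q).comp (measurable_const_mul z)).ennreal_ofReal
  have hofReal : ∀ z : ℝ, 0 < z → z ≤ 1 →
      ENNReal.ofReal (I z) = ∫⁻ u in Set.Ioc (0:ℝ) 1, ENNReal.ofReal (f (z * u)) := by
    intro z hz0 hz1
    rw [hI]
    simp only
    rw [intervalIntegral.integral_of_le zero_le_one]
    refine MeasureTheory.ofReal_integral_eq_lintegral_ofReal ((hIint z hz0 hz1).1) ?_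
    refine (ae_restrict_iff' measurableSet_Ioc).mpr (ae_of_all _ fun u hu => ?_)
    exact hfnn _ ⟨mul_nonneg hz0.le hu.1.le, by nlinarith [hu.1.le, hu.2]⟩
  set Φ : ℝ → ℝ≥0∞ := fun u => ENNReal.ofReal (f (x * u)) with hΦ
  set Ψ : ℝ → ℝ≥0∞ := fun u => ENNReal.ofReal (f (y * u)) with hΨ
  have step1 : (∫⁻ u in Set.Ioc (0:ℝ) 1, ENNReal.ofReal (f (m * u))) ≤
      ∫⁻ u in Set.Ioc (0:ℝ) 1, (fun u => Φ u ^ l) u * (fun u => Ψ u ^ (1-l)) u := by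
    refine MeasureTheory.lintegral_mono_ae ?_
    have h1 : ∀ᵐ u ∂(volume.restrict (Set.Ioc (0:ℝ) 1)), u ∈ Set.Ioc (0:ℝ) 1 :=
      MeasureTheory.ae_restrict_mem measurableSet_Ioc
    have h2 : ∀ᵐ u ∂(volume.restrict (Set.Ioc (0:ℝ) 1)), u ≠ 1 := by
      refine MeasureTheory.ae_restrict_of_ae ?_
      rw [MeasureTheory.ae_iff]
      simpa using (by simp : volume ({(1:ℝ)}) = 0)
    filter_upwards [h1, h2] with u hu hne
    have hu0 : 0 < u := hu.1
    have hu1 : u < 1 := lt_of_le_of_ne hu.2 hne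
    have hxu : x * u ∈ Set.Ioo (0:ℝ) 1 :=
      ⟨mul_pos hx0 hu0, by nlinarith⟩
    have hyu : y * u ∈ Set.Ioo (0:ℝ) 1 :=
      ⟨mul_pos hy0 hu0, by nlinarith⟩
    have hmu : m * u = (x * u) ^ l * (y * u) ^ (1-l) := by
      rw [Real.mul_rpow hx0.le hu0.le, Real.mul_rpow hy0.le hu0.le, hm]
      have : u ^ l * u ^ (1-l) = u := by
        rw [← Real.rpow_add hu0]; simp
      calc x ^ l * y ^ (1-l) * u = x ^ l * y ^ (1-l) * (u ^ l * u ^ (1-l)) := by rw [this]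
        _ = x ^ l * u ^ l * (y ^ (1-l) * u ^ (1-l)) := by ring
    have hpt := pq_ptwise p q hp hq hxu hyu ⟨hl0, hl1⟩
    rw [← hmu] at hpt
    have hfxu : 0 ≤ f (x * u) := hfnn _ ⟨hxu.1.le, hxu.2.le⟩
    have hfyu : 0 ≤ f (y * u) := hfnn _ ⟨hyu.1.le, hyu.2.le⟩
    calc ENNReal.ofReal (f (m * u)) ≤ ENNReal.ofReal (f (x*u) ^ l * f (y*u) ^ (1-l)) :=
          ENNReal.ofReal_le_ofReal hpt
      _ = Φ u ^ l * Ψ u ^ (1-l) := by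
          rw [ENNReal.ofReal_mul (Real.rpow_nonneg hfxu _), hΦ, hΨ]
          simp only
          rw [ENNReal.ofReal_rpow_of_nonneg hfxu hl0.le,
            ENNReal.ofReal_rpow_of_nonneg hfyu (by linarith)]
  have hpq' : Real.HolderConjugate (1/l) (1/(1-l)) := by
    rw [Real.holderConjugate_iff]; constructor
    · rw [lt_div_iff₀ hl0]; linarith
    · rw [one_div, inv_inv, one_div, inv_inv]; ring
  have step2 : (∫⁻ u in Set.Ioc (0:ℝ) 1, (fun u => Φ u ^ l) u * (fun u => Ψ u ^ (1-l)) u) ≤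
      (∫⁻ u in Set.Ioc (0:ℝ) 1, Φ u) ^ l * (∫⁻ u in Set.Ioc (0:ℝ) 1, Ψ u) ^ (1-l) := by
    have h := ENNReal.lintegral_mul_le_Lp_mul_Lq (volume.restrict (Set.Ioc (0:ℝ) 1)) hpq'
      (f := fun u => Φ u ^ l) (g := fun u => Ψ u ^ (1-l))
      (((hmeas x).pow_const l).aemeasurable) (((hmeas y).pow_const (1-l)).aemeasurable)
    have e1 : ∀ u : ℝ, (Φ u ^ l) ^ l⁻¹ = Φ u := by
      intro u
      rw [← ENNReal.rpow_mul, mul_inv_cancel₀ hl0.ne', ENNReal.rpow_one]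
    have e2 : ∀ u : ℝ, (Ψ u ^ (1-l)) ^ (1-l)⁻¹ = Ψ u := by
      intro u
      rw [← ENNReal.rpow_mul, mul_inv_cancel₀ (by linarith : (1:ℝ)-l ≠ 0), ENNReal.rpow_one]
    simp only [Pi.mul_apply] at h
    simpa [e1, e2, one_div_one_div] using h
  -- combine
  have hIm : ENNReal.ofReal (I m) ≤ ENNReal.ofReal ((I x) ^ l * (I y) ^ (1-l)) := by
    rw [hofReal m hm0 hm1,
      ENNReal.ofReal_mul (Real.rpow_nonneg (hInn x hx0 hx1) _),
      ← ENNReal.ofReal_rpow_of_nonneg (hInn x hx0 hx1) hl0.le,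
      ← ENNReal.ofReal_rpow_of_nonneg (hInn y hy0 hy1) (by linarith),
      hofReal x hx0 hx1, hofReal y hy0 hy1]
    exact step1.trans step2
  have hIm' : I m ≤ (I x) ^ l * (I y) ^ (1-l) :=
    (ENNReal.ofReal_le_ofReal_iff
      (mul_nonneg (Real.rpow_nonneg (hInn x hx0 hx1) _)
        (Real.rpow_nonneg (hInn y hy0 hy1) _))).mp hIm
  rw [hFI m hm0, hFI x hx0, hFI y hy0,
    Real.mul_rpow hx0.le (hInn x hx0 hx1), Real.mul_rpow hy0.le (hInn y hy0 hy1)]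
  calc m * I m ≤ m * ((I x) ^ l * (I y) ^ (1-l)) :=
        mul_le_mul_of_nonneg_left hIm' hm0.le
    _ = x ^ l * (I x) ^ l * (y ^ (1-l) * (I y) ^ (1-l)) := by rw [hm]; ring

theorem sin_pq_geom_concave (p q : ℝ) (hp : 1 < p) (hq : 1 < q) (S : ℝ → ℝ)
    (hS : ∀ x ∈ Set.Icc (0:ℝ) 1,
      S (∫ t in (0:ℝ)..x, (1 - t ^ q) ^ (-1/p)) = x) :
    ∀ r ∈ Set.Ioo (0:ℝ) (∫ t in (0:ℝ)..1, (1 - t ^ q) ^ (-1/p)),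
      ∀ s ∈ Set.Ioo (0:ℝ) (∫ t in (0:ℝ)..1, (1 - t ^ q) ^ (-1/p)),
        ∀ l ∈ Set.Icc (0:ℝ) 1,
          S (r ^ l * s ^ (1 - l)) ≥ S r ^ l * S s ^ (1 - l) := by
  intro r hr s hs l hl
  obtain ⟨hr0, hr1⟩ := hr
  obtain ⟨hs0, hs1⟩ := hs
  obtain ⟨hl0, hl1⟩ := hl
  rcases eq_or_lt_of_le hl0 with h0 | h0
  · rw [← h0]; simp
  rcases eq_or_lt_of_le hl1 with h1 | h1
  · rw [h1]; simp
  set F : ℝ → ℝ := fun x => ∫ t in (0:ℝ)..x, (1 - t ^ q) ^ (-1/p) with hFdef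
  have hmono := pq_F_mono p q hp hq
  have hcont := pq_F_cont p q hp hq
  rw [← hFdef] at hmono hcont
  have hF0 : F 0 = 0 := intervalIntegral.integral_same
  have hF1pos : 0 < F 1 := by
    have := hmono (Set.left_mem_Icc.mpr zero_le_one) (Set.right_mem_Icc.mpr zero_le_one)
      zero_lt_one
    rwa [hF0] at this
  have hIVT := intermediate_value_Icc zero_le_one hcont
  obtain ⟨x, hxmem, hxval⟩ := hIVT ⟨by rw [hF0]; exact hr0.le, hr1.le⟩
  obtain ⟨y, hymem, hyval⟩ := hIVT ⟨by rw [hF0]; exact hs0.le, hs1.le⟩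
  have hmnn : 0 < r ^ l * s ^ (1-l) :=
    mul_pos (Real.rpow_pos_of_pos hr0 _) (Real.rpow_pos_of_pos hs0 _)
  have hmle : r ^ l * s ^ (1-l) ≤ F 1 := by
    calc r ^ l * s ^ (1-l) ≤ (F 1) ^ l * (F 1) ^ (1-l) :=
          mul_le_mul (Real.rpow_le_rpow hr0.le hr1.le h0.le)
            (Real.rpow_le_rpow hs0.le hs1.le (by linarith))
            (Real.rpow_nonneg hs0.le _) (Real.rpow_nonneg hF1pos.le _)
      _ = F 1 := by rw [← Real.rpow_add hF1pos]; simp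
  obtain ⟨z, hzmem, hzval⟩ := hIVT ⟨by rw [hF0]; exact hmnn.le, hmle⟩
  have hx0 : 0 < x := by
    rcases eq_or_lt_of_le hxmem.1 with h | h
    · exfalso; rw [← h, hF0] at hxval; linarith
    · exact h
  have hy0 : 0 < y := by
    rcases eq_or_lt_of_le hymem.1 with h | h
    · exfalso; rw [← h, hF0] at hyval; linarith
    · exact h
  have hSr : S r = x := by rw [← hxval]; exact hS x hxmem
  have hSs : S s = y := by rw [← hyval]; exact hS y hymem
  have hSm : S (r ^ l * s ^ (1-l)) = z := by rw [← hzval]; exact hS z hzmem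
  rw [hSr, hSs, hSm]
  have hgc := pq_F_gconvex p q hp hq (x := x) (y := y) (l := l)
    ⟨hx0, hxmem.2⟩ ⟨hy0, hymem.2⟩ ⟨h0, h1⟩
  change F (x ^ l * y ^ (1-l)) ≤ F x ^ l * F y ^ (1-l) at hgc
  rw [hxval, hyval, ← hzval] at hgc
  have hmem2 : x ^ l * y ^ (1-l) ∈ Set.Icc (0:ℝ) 1 := by
    constructor
    · positivity
    · calc x ^ l * y ^ (1-l) ≤ 1 ^ l * 1 ^ (1-l) :=
            mul_le_mul (Real.rpow_le_rpow hx0.le hxmem.2 h0.le)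
              (Real.rpow_le_rpow hy0.le hymem.2 (by linarith))
              (Real.rpow_nonneg hy0.le _) (Real.rpow_nonneg zero_le_one _)
        _ = 1 := by simp
  exact (hmono.le_iff_le hmem2 hzmem).mp hgc
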